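/- Let (Ω, F, μ) be a probability space, T : Ω → Ω an invertible ergodic measure-preserving transformation, and f : Ω → ℤ measurable; set X_n = f ∘ T^n for n ∈ ℤ. Then the event that the connected component of 0 in the record graph of (X_n(ω)) is finite has probability 0 or 1; that is, μ[{ω : the set {j ∈ ℤ : R^m(j) = R^n(0) for some m, n ≥ 0} is finite}] ∈ {0, 1}, where R is the record map of (X_n(ω)). -/
import Mathlib


open MeasureTheory

/-- The record map of an integer-valued sequence `x : ℤ → ℤ`: `recordMap x i` is the least
`n > i` such that `∑_{l=i}^{n-1} x l ≥ 0` if such an `n` exists, and `i` otherwise. -/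
noncomputable def recordMap (x : ℤ → ℤ) (i : ℤ) : ℤ := by
  classical
  exact if ∃ n, i < n ∧ 0 ≤ ∑ l ∈ Finset.Ico i n, x l then
    sInf {n : ℤ | i < n ∧ 0 ≤ ∑ l ∈ Finset.Ico i n, x l}
  else i

/-- The `n`-th iterate (`n : ℤ`) of an invertible transformation `T`. -/
def zIter {Ω : Type*} [MeasurableSpace Ω] (T : Ω ≃ᵐ Ω) (n : ℤ) (ω : Ω) : Ω :=
  if 0 ≤ n then (⇑T)^[n.toNat] ω else (⇑T.symm)^[(-n).toNat] ω

/-- The stationary sequence `X_n(ω) = f (T^n ω)`, `n : ℤ`, realized at `ω`. -/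
def statSeq {Ω : Type*} [MeasurableSpace Ω] (T : Ω ≃ᵐ Ω) (f : Ω → ℤ) (ω : Ω) : ℤ → ℤ :=
  fun n => f (zIter T n ω)

/-! ### Combinatorial facts about the record map -/

/-- `k` is a "record fixed point" of `x`: every forward partial sum starting at `k` is
negative, i.e. `recordMap x k = k`. -/
def IsRec (x : ℤ → ℤ) (k : ℤ) : Prop :=
  ∀ n, k < n → ∑ l ∈ Finset.Ico k n, x l < 0

lemma recordMap_eq_self (x : ℤ → ℤ) {k : ℤ} (h : IsRec x k) : recordMap x k = k := by
  unfold recordMap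
  rw [if_neg]
  rintro ⟨n, hn, hs⟩
  exact absurd (h n hn) (not_lt.mpr hs)

lemma not_isRec_iff {x : ℤ → ℤ} {i : ℤ} :
    ¬ IsRec x i ↔ ∃ n, i < n ∧ 0 ≤ ∑ l ∈ Finset.Ico i n, x l := by
  unfold IsRec
  push_neg
  simp only [not_lt]

lemma bddBelow_recSet (x : ℤ → ℤ) (i : ℤ) :
    BddBelow {n : ℤ | i < n ∧ 0 ≤ ∑ l ∈ Finset.Ico i n, x l} :=
  ⟨i, fun _ hn => hn.1.le⟩

lemma lt_recordMap_of_not_isRec {x : ℤ → ℤ} {i : ℤ} (h : ¬ IsRec x i) :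
    i < recordMap x i ∧ 0 ≤ ∑ l ∈ Finset.Ico i (recordMap x i), x l := by
  rw [not_isRec_iff] at h
  unfold recordMap
  rw [if_pos h]
  exact Int.csInf_mem h (bddBelow_recSet x i)

lemma le_recordMap (x : ℤ → ℤ) (i : ℤ) : i ≤ recordMap x i := by
  by_cases h : IsRec x i
  · rw [recordMap_eq_self x h]
  · exact (lt_recordMap_of_not_isRec h).1.le

lemma le_iterate_recordMap (x : ℤ → ℤ) (i : ℤ) (m : ℕ) : i ≤ (recordMap x)^[m] i := by
  induction m with
  | zero => simp
  | succ m ih =>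
      rw [Function.iterate_succ_apply']
      exact ih.trans (le_recordMap x _)

/-- No record edge can jump over a record fixed point. -/
lemma not_isRec_of_lt_recordMap {x : ℤ → ℤ} {i k : ℤ} (h1 : i < k) (h2 : k < recordMap x i) :
    ¬ IsRec x k := by
  intro hk
  by_cases hi : IsRec x i
  · rw [recordMap_eq_self x hi] at h2; omega
  obtain ⟨-, hsum⟩ := lt_recordMap_of_not_isRec hi
  -- `k` is strictly below the infimum, hence not in the record set of `i`.
  have hknot : ¬ (i < k ∧ 0 ≤ ∑ l ∈ Finset.Ico i k, x l) := by
    intro hmem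
    have hle : recordMap x i ≤ k := by
      have hex : ∃ n, i < n ∧ 0 ≤ ∑ l ∈ Finset.Ico i n, x l := ⟨k, hmem⟩
      unfold recordMap
      rw [if_pos hex]
      exact csInf_le (bddBelow_recSet x i) hmem
    omega
  have hneg : ∑ l ∈ Finset.Ico i k, x l < 0 := by
    by_contra hc
    exact hknot ⟨h1, by omega⟩
  -- split the sum at `k`
  have hsplit : ∑ l ∈ Finset.Ico i k, x l + ∑ l ∈ Finset.Ico k (recordMap x i), x l
      = ∑ l ∈ Finset.Ico i (recordMap x i), x l := by
    rw [← Finset.sum_union (Finset.Ico_disjoint_Ico_consecutive i k (recordMap x i)),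
      Finset.Ico_union_Ico_eq_Ico h1.le h2.le]
  have := hk (recordMap x i) h2
  omega

/-- Orbits never pass a record fixed point. -/
lemma recordMap_le_of_isRec {x : ℤ → ℤ} {k : ℤ} (hk : IsRec x k) :
    ∀ i ≤ k, recordMap x i ≤ k := by
  intro i hi
  rcases eq_or_lt_of_le hi with rfl | hlt
  · rw [recordMap_eq_self x hk]
  · by_contra hc
    exact not_isRec_of_lt_recordMap hlt (by omega) hk

lemma iterate_recordMap_le_of_isRec {x : ℤ → ℤ} {k : ℤ} (hk : IsRec x k) {i : ℤ}
    (hi : i ≤ k) (m : ℕ) : (recordMap x)^[m] i ≤ k := by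
  induction m with
  | zero => simpa
  | succ m ih =>
      rw [Function.iterate_succ_apply']
      exact recordMap_le_of_isRec hk _ ih

/-- If `k` is a record fixed point and there is no record fixed point in `[i, k)`,
then the orbit of `i` reaches `k`. -/
lemma reach_of_no_fix {x : ℤ → ℤ} {k : ℤ} (hk : IsRec x k) :
    ∀ d : ℕ, ∀ i, i ≤ k → (k - i).toNat ≤ d →
      (∀ j, i ≤ j → j < k → ¬ IsRec x j) → ∃ m, (recordMap x)^[m] i = k := by
  intro d
  induction d with
  | zero =>
      intro i hik hd _
      have : i = k := by omega
      exact ⟨0, by simpa using this⟩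
  | succ d ih =>
      intro i hik hd hno
      rcases eq_or_lt_of_le hik with rfl | hlt
      · exact ⟨0, rfl⟩
      have hni : ¬ IsRec x i := hno i le_rfl hlt
      have h1 : i < recordMap x i := (lt_recordMap_of_not_isRec hni).1
      have h2 : recordMap x i ≤ k := recordMap_le_of_isRec hk i hik
      obtain ⟨m, hm⟩ := ih (recordMap x i) h2 (by omega)
        (fun j hj hjk => hno j (by omega) hjk)
      exact ⟨m + 1, by rw [Function.iterate_succ_apply]; exact hm⟩

/-- The connected component of `0` in the record graph. -/
def recComp (x : ℤ → ℤ) : Set ℤ :=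
  {j : ℤ | ∃ m n : ℕ, (recordMap x)^[m] j = (recordMap x)^[n] 0}

/-- The key combinatorial dichotomy: the component of `0` is finite iff there are record
fixed points both in `[0, ∞)` and in `(-∞, 0)`. -/
theorem recComp_finite_iff (x : ℤ → ℤ) :
    (recComp x).Finite ↔ (∃ k, 0 ≤ k ∧ IsRec x k) ∧ (∃ k, k < 0 ∧ IsRec x k) := by
  constructor
  · intro hfin
    by_contra hc
    rw [not_and_or] at hc
    rcases hc with hW | hV
    · -- no record fixed point on the right: the forward orbit of `0` is infinite
      push_neg at hW
      have hmono : StrictMono (fun n : ℕ => (recordMap x)^[n] (0 : ℤ)) := by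
        apply strictMono_nat_of_lt_succ
        intro n
        have h0 : (0 : ℤ) ≤ (recordMap x)^[n] 0 := le_iterate_recordMap x 0 n
        have : ¬ IsRec x ((recordMap x)^[n] 0) := hW _ h0
        rw [Function.iterate_succ_apply']
        exact (lt_recordMap_of_not_isRec this).1
      have hinf : (recComp x).Infinite :=
        Set.infinite_of_injective_forall_mem (f := fun n : ℕ => (recordMap x)^[n] (0 : ℤ))
          hmono.injective (fun n => ⟨0, n, rfl⟩)
      exact hinf hfin
    · -- record fixed points exist on the right but not on the left:
      -- every `i ≤ 0` reaches the least right fixed point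
      push_neg at hV
      rcases hfin.exists_notMem with ⟨j0, hj0⟩
      · by_cases hW : ∃ k, 0 ≤ k ∧ IsRec x k
        · obtain ⟨k1, hk1, hk1rec⟩ := hW
          set S : Set ℤ := {k : ℤ | 0 ≤ k ∧ IsRec x k} with hS
          have hSne : S.Nonempty := ⟨k1, hk1, hk1rec⟩
          have hSbdd : BddBelow S := ⟨0, fun k hk => hk.1⟩
          have hmem : sInf S ∈ S := Int.csInf_mem hSne hSbdd
          set k0 := sInf S with hk0
          have hno : ∀ j, j < k0 → ¬ IsRec x j := by
            intro j hj hrec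
            by_cases hj0 : 0 ≤ j
            · exact absurd (csInf_le hSbdd ⟨hj0, hrec⟩) (by omega)
            · exact hV j (by omega) hrec
          have hreach : ∀ i ≤ (0 : ℤ), ∃ m, (recordMap x)^[m] i = k0 := by
            intro i hi
            exact reach_of_no_fix hmem.2 (k0 - i).toNat i (by exact hi.trans hmem.1) le_rfl
              (fun j _ hj => hno j hj)
          obtain ⟨n0, hn0⟩ := hreach 0 le_rfl
          have hinj : Function.Injective (fun n : ℕ => -(n : ℤ)) := by
            intro a b hab
            simpa using hab
          have hinf : (recComp x).Infinite := by
            apply Set.infinite_of_injective_forall_mem hinj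
            intro a
            obtain ⟨m, hm⟩ := hreach (-(a : ℤ)) (by omega)
            exact ⟨m, n0, by rw [hm, hn0]⟩
          exact hinf hfin
        · push_neg at hW
          -- no right fixed point either: forward orbit infinite (same as first case)
          have hmono : StrictMono (fun n : ℕ => (recordMap x)^[n] (0 : ℤ)) := by
            apply strictMono_nat_of_lt_succ
            intro n
            have h0 : (0 : ℤ) ≤ (recordMap x)^[n] 0 := le_iterate_recordMap x 0 n
            have : ¬ IsRec x ((recordMap x)^[n] 0) := hW _ h0
            rw [Function.iterate_succ_apply']
            exact (lt_recordMap_of_not_isRec this).1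
          have hinf : (recComp x).Infinite :=
            Set.infinite_of_injective_forall_mem (f := fun n : ℕ => (recordMap x)^[n] (0 : ℤ))
              hmono.injective (fun n => ⟨0, n, rfl⟩)
          exact hinf hfin
  · rintro ⟨⟨k, hk0, hk⟩, ⟨k', hk'0, hk'⟩⟩
    apply (Set.finite_Ioc k' k).subset
    rintro j ⟨m, n, hmn⟩
    constructor
    · -- j > k'
      by_contra hc
      push_neg at hc
      have h1 : (recordMap x)^[m] j ≤ k' := iterate_recordMap_le_of_isRec hk' hc m
      have h2 : (0 : ℤ) ≤ (recordMap x)^[n] 0 := le_iterate_recordMap x 0 n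
      omega
    · -- j ≤ k
      have h1 : (recordMap x)^[n] (0 : ℤ) ≤ k := iterate_recordMap_le_of_isRec hk hk0 n
      have h2 : j ≤ (recordMap x)^[m] j := le_iterate_recordMap x j m
      omega

/-! ### Shift covariance -/

lemma zIter_succ {Ω : Type*} [MeasurableSpace Ω] (T : Ω ≃ᵐ Ω) (n : ℤ) (ω : Ω) :
    zIter T n (T ω) = zIter T (n + 1) ω := by
  unfold zIter
  by_cases h : 0 ≤ n
  · rw [if_pos h, if_pos (by omega)]
    have : (n + 1).toNat = n.toNat + 1 := by omega
    rw [this, Function.iterate_succ_apply]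
  · by_cases h1 : n = -1
    · subst h1
      norm_num
    · rw [if_neg h, if_neg (by omega)]
      have : (-n).toNat = (-(n + 1)).toNat + 1 := by omega
      rw [this, Function.iterate_succ_apply, MeasurableEquiv.symm_apply_apply]

lemma statSeq_shift {Ω : Type*} [MeasurableSpace Ω] (T : Ω ≃ᵐ Ω) (f : Ω → ℤ) (ω : Ω) :
    statSeq T f (T ω) = fun n => statSeq T f ω (n + 1) := by
  funext n
  simp only [statSeq, zIter_succ]

lemma isRec_shift_iff (x : ℤ → ℤ) (k : ℤ) :
    IsRec (fun n => x (n + 1)) k ↔ IsRec x (k + 1) := by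
  constructor
  · intro h n hn
    have := h (n - 1) (by omega)
    rwa [Finset.sum_Ico_add' x k (n - 1) 1, sub_add_cancel] at this
  · intro h n hn
    have := h (n + 1) (by omega)
    rwa [Finset.sum_Ico_add' x k n 1]

/-! ### Measurability -/

lemma zIter_measurable {Ω : Type*} [MeasurableSpace Ω] (T : Ω ≃ᵐ Ω) (n : ℤ) :
    Measurable (zIter T n) := by
  unfold zIter
  by_cases h : 0 ≤ n
  · simp only [if_pos h]
    exact T.measurable.iterate _
  · simp only [if_neg h]
    exact T.symm.measurable.iterate _

/-- For a stationary ergodic integer-valued sequence `X_n = f ∘ T^n`, the event that the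
connected component of `0` in the record graph of `(X_n(ω))` is finite has probability
`0` or `1`. -/
theorem record_component_zero_finite_trivial {Ω : Type*} [MeasurableSpace Ω]
    (μ : Measure Ω) [IsProbabilityMeasure μ] (T : Ω ≃ᵐ Ω)
    (hT : Ergodic (⇑T) μ) (f : Ω → ℤ) (hf : Measurable f) :
    μ {ω | {j : ℤ | ∃ m n : ℕ,
        (recordMap (statSeq T f ω))^[m] j = (recordMap (statSeq T f ω))^[n] 0}.Finite}
      = 0 ∨
    μ {ω | {j : ℤ | ∃ m n : ℕ,
        (recordMap (statSeq T f ω))^[m] j = (recordMap (statSeq T f ω))^[n] 0}.Finite}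
      = 1 := by
  classical
  set W : Set Ω := {ω | ∃ k, 0 ≤ k ∧ IsRec (statSeq T f ω) k} with hWdef
  set V : Set Ω := {ω | ∃ k, k < 0 ∧ IsRec (statSeq T f ω) k} with hVdef
  -- the event in question equals W ∩ V
  have hA : {ω | {j : ℤ | ∃ m n : ℕ,
        (recordMap (statSeq T f ω))^[m] j = (recordMap (statSeq T f ω))^[n] 0}.Finite}
      = W ∩ V := by
    ext ω
    have := recComp_finite_iff (statSeq T f ω)
    simpa [recComp, Set.mem_setOf_eq, hWdef, hVdef, Set.mem_inter_iff] using this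
  -- measurability of the basic sum events
  have hsum : ∀ k n : ℤ, MeasurableSet {ω | ∑ l ∈ Finset.Ico k n, f (zIter T l ω) < 0} := by
    intro k n
    have hg : Measurable (fun ω => ∑ l ∈ Finset.Ico k n, f (zIter T l ω)) :=
      Finset.measurable_sum _ (fun l _ => hf.comp (zIter_measurable T l))
    exact hg (MeasurableSet.of_discrete (s := Set.Iio 0))
  have hrecset : ∀ k : ℤ, MeasurableSet {ω | IsRec (statSeq T f ω) k} := by
    intro k
    have : {ω | IsRec (statSeq T f ω) k}
        = ⋂ (n : ℤ), ⋂ (_ : k < n), {ω | ∑ l ∈ Finset.Ico k n, f (zIter T l ω) < 0} := by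
      ext ω
      simp [IsRec, statSeq, Set.mem_iInter]
    rw [this]
    exact MeasurableSet.iInter fun n => MeasurableSet.iInter fun _ => hsum k n
  have hWmeas : MeasurableSet W := by
    have : W = ⋃ (k : ℤ), ⋃ (_ : 0 ≤ k), {ω | IsRec (statSeq T f ω) k} := by
      ext ω; simp [hWdef]
    rw [this]
    exact MeasurableSet.iUnion fun k => MeasurableSet.iUnion fun _ => hrecset k
  have hVmeas : MeasurableSet V := by
    have : V = ⋃ (k : ℤ), ⋃ (_ : k < 0), {ω | IsRec (statSeq T f ω) k} := by
      ext ω; simp [hVdef]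
    rw [this]
    exact MeasurableSet.iUnion fun k => MeasurableSet.iUnion fun _ => hrecset k
  -- shift behaviour of IsRec
  have hshift : ∀ ω k, IsRec (statSeq T f (T ω)) k ↔ IsRec (statSeq T f ω) (k + 1) := by
    intro ω k
    rw [statSeq_shift]
    exact isRec_shift_iff _ k
  -- W is backward invariant: T⁻¹ W ⊆ W
  have hWsub : (⇑T) ⁻¹' W ⊆ W := by
    intro ω hω
    obtain ⟨k, hk0, hk⟩ := hω
    exact ⟨k + 1, by omega, (hshift ω k).mp hk⟩
  -- V is forward invariant: V ⊆ T⁻¹ V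
  have hVsub : V ⊆ (⇑T) ⁻¹' V := by
    intro ω hω
    obtain ⟨k, hk0, hk⟩ := hω
    refine ⟨k - 1, by omega, ?_⟩
    rw [hshift ω (k - 1), sub_add_cancel]
    exact hk
  have hW01 : μ W = 0 ∨ μ W = 1 := by
    rcases hT.ae_empty_or_univ_of_preimage_ae_le hWmeas.nullMeasurableSet
        hWsub.eventuallyLE with h | h
    · exact Or.inl (ae_eq_empty.mp h)
    · right
      rw [measure_congr h, measure_univ]
  have hV01 : μ V = 0 ∨ μ V = 1 := by
    rcases hT.ae_empty_or_univ_of_ae_le_preimage hVmeas.nullMeasurableSet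
        hVsub.eventuallyLE with h | h
    · exact Or.inl (ae_eq_empty.mp h)
    · right
      rw [measure_congr h, measure_univ]
  rw [hA]
  rcases hW01 with hW0 | hW1
  · exact Or.inl (measure_mono_null Set.inter_subset_left hW0)
  rcases hV01 with hV0 | hV1
  · exact Or.inl (measure_mono_null Set.inter_subset_right hV0)
  · right
    rw [← prob_compl_eq_zero_iff (hWmeas.inter hVmeas)]
    have : (W ∩ V)ᶜ = Wᶜ ∪ Vᶜ := by rw [Set.compl_inter]
    rw [this]
    have hWc : μ Wᶜ = 0 := (prob_compl_eq_zero_iff hWmeas).mpr hW1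
    have hVc : μ Vᶜ = 0 := (prob_compl_eq_zero_iff hVmeas).mpr hV1
    exact measure_union_null hWc hVc
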